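/- (A non-unique fixed point of the concurrent memory channel forces the controlled-unitary case.) Let α = (α_x, α_y, α_z) ∈ ℝ³ satisfy 0 ≤ |α_z| ≤ α_y ≤ α_x ≤ π/2, let D(α) = exp((i/2)(α_x σ_x⊗σ_x + α_y σ_y⊗σ_y + α_z σ_z⊗σ_z)), let W_2 be any 2×2 unitary matrix, and define the concurrent channel on the memory by C(ξ) = W_2 · Tr_H[ D(α) ( ξ ⊗ (I₂/2) ) D(α)† ] · W_2†. If there exists a 2×2 density matrix ξ with ξ ≠ I₂/2 and C(ξ) = ξ, then α_y = α_z = 0. -/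

import Mathlib

open Matrix Kronecker BigOperators ComplexOrder

noncomputable def σx : Matrix (Fin 2) (Fin 2) ℂ := !![0, 1; 1, 0]
noncomputable def σy : Matrix (Fin 2) (Fin 2) ℂ := !![0, -Complex.I; Complex.I, 0]
noncomputable def σz : Matrix (Fin 2) (Fin 2) ℂ := !![1, 0; 0, -1]

/-- The Cartan interaction `D(α) = exp((i/2)(α_x σ_x⊗σ_x + α_y σ_y⊗σ_y + α_z σ_z⊗σ_z))`. -/
noncomputable def Dmat (αx αy αz : ℝ) : Matrix (Fin 2 × Fin 2) (Fin 2 × Fin 2) ℂ :=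
  NormedSpace.exp ((Complex.I / 2) • ((αx : ℂ) • (σx ⊗ₖ σx) +
    (αy : ℂ) • (σy ⊗ₖ σy) + (αz : ℂ) • (σz ⊗ₖ σz)))

/-- Partial trace over the second (system) factor. -/
noncomputable def ptraceH (X : Matrix (Fin 2 × Fin 2) (Fin 2 × Fin 2) ℂ) :
    Matrix (Fin 2) (Fin 2) ℂ :=
  Matrix.of fun a b => ∑ i : Fin 2, X (a, i) (b, i)

/- ### Auxiliary lemmas -/

lemma exp_smul_of_sq_eq_one {n : Type*} [Fintype n] [DecidableEq n]
    (A : Matrix n n ℂ) (hA : A * A = 1) (c : ℂ) :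
    NormedSpace.exp (c • A) =
      Complex.cosh c • (1 : Matrix n n ℂ) + Complex.sinh c • A := by
  letI : SeminormedRing (Matrix n n ℂ) := Matrix.linftyOpSemiNormedRing
  letI : NormedRing (Matrix n n ℂ) := Matrix.linftyOpNormedRing
  letI : NormedAlgebra ℂ (Matrix n n ℂ) := Matrix.linftyOpNormedAlgebra
  rw [NormedSpace.exp_eq_tsum ℂ]
  refine HasSum.tsum_eq ?_
  refine HasSum.even_add_odd ?_ ?_
  · have h : ∀ k : ℕ, ((((2*k).factorial : ℂ))⁻¹ • (c • A) ^ (2*k)) =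
        (c ^ (2*k) / (2*k).factorial) • (1 : Matrix n n ℂ) := by
      intro k
      have hAk : A ^ (2*k) = 1 := by rw [pow_mul, pow_two, hA, one_pow]
      rw [smul_pow, hAk, smul_smul]
      congr 1
      field_simp
    simp_rw [h]
    exact (Complex.hasSum_cosh c).smul_const _
  · have h : ∀ k : ℕ, ((((2*k+1).factorial : ℂ))⁻¹ • (c • A) ^ (2*k+1)) =
        (c ^ (2*k+1) / (2*k+1).factorial) • A := by
      intro k
      have hAk : A ^ (2*k+1) = A := by rw [pow_succ, pow_mul, pow_two, hA, one_pow, one_mul]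
      rw [smul_pow, hAk, smul_smul]
      congr 1
      field_simp
    simp_rw [h]
    exact (Complex.hasSum_sinh c).smul_const _

lemma XX_sq : (σx ⊗ₖ σx) * (σx ⊗ₖ σx) = 1 := by
  ext ⟨i1,i2⟩ ⟨j1,j2⟩
  fin_cases i1 <;> fin_cases i2 <;> fin_cases j1 <;> fin_cases j2 <;>
    simp [σx, Matrix.mul_apply, Fintype.sum_prod_type, Fin.sum_univ_succ,
      Matrix.one_apply, kroneckerMap_apply, Prod.ext_iff]

lemma YY_sq : (σy ⊗ₖ σy) * (σy ⊗ₖ σy) = 1 := by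
  ext ⟨i1,i2⟩ ⟨j1,j2⟩
  fin_cases i1 <;> fin_cases i2 <;> fin_cases j1 <;> fin_cases j2 <;>
    simp [σy, Matrix.mul_apply, Fintype.sum_prod_type, Fin.sum_univ_succ,
      Matrix.one_apply, kroneckerMap_apply, Prod.ext_iff]

lemma ZZ_sq : (σz ⊗ₖ σz) * (σz ⊗ₖ σz) = 1 := by
  ext ⟨i1,i2⟩ ⟨j1,j2⟩
  fin_cases i1 <;> fin_cases i2 <;> fin_cases j1 <;> fin_cases j2 <;>
    simp [σz, Matrix.mul_apply, Fintype.sum_prod_type, Fin.sum_univ_succ,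
      Matrix.one_apply, kroneckerMap_apply, Prod.ext_iff]

lemma commXY : Commute (σx ⊗ₖ σx) (σy ⊗ₖ σy) := by
  show _ = _
  ext ⟨i1,i2⟩ ⟨j1,j2⟩
  fin_cases i1 <;> fin_cases i2 <;> fin_cases j1 <;> fin_cases j2 <;>
    simp [σx, σy, Matrix.mul_apply, Fintype.sum_prod_type, Fin.sum_univ_succ,
      kroneckerMap_apply, Prod.ext_iff]

lemma commXZ : Commute (σx ⊗ₖ σx) (σz ⊗ₖ σz) := by
  show _ = _
  ext ⟨i1,i2⟩ ⟨j1,j2⟩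
  fin_cases i1 <;> fin_cases i2 <;> fin_cases j1 <;> fin_cases j2 <;>
    simp [σx, σz, Matrix.mul_apply, Fintype.sum_prod_type, Fin.sum_univ_succ,
      kroneckerMap_apply, Prod.ext_iff]

lemma commYZ : Commute (σy ⊗ₖ σy) (σz ⊗ₖ σz) := by
  show _ = _
  ext ⟨i1,i2⟩ ⟨j1,j2⟩
  fin_cases i1 <;> fin_cases i2 <;> fin_cases j1 <;> fin_cases j2 <;>
    simp [σy, σz, Matrix.mul_apply, Fintype.sum_prod_type, Fin.sum_univ_succ,
      kroneckerMap_apply, Prod.ext_iff]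

/-- explicit form of the Cartan unitary -/
noncomputable def Dc (αx αy αz : ℝ) : Matrix (Fin 2 × Fin 2) (Fin 2 × Fin 2) ℂ :=
  ((Real.cos (αx/2) * Real.cos (αy/2) * Real.cos (αz/2) : ℝ) +
      Complex.I * (Real.sin (αx/2) * Real.sin (αy/2) * Real.sin (αz/2) : ℝ)) • 1 +
  (Complex.I * (Real.sin (αx/2) * Real.cos (αy/2) * Real.cos (αz/2) : ℝ) +
      (Real.cos (αx/2) * Real.sin (αy/2) * Real.sin (αz/2) : ℝ)) • (σx ⊗ₖ σx) +
  ((Real.sin (αx/2) * Real.cos (αy/2) * Real.sin (αz/2) : ℝ) +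
      Complex.I * (Real.cos (αx/2) * Real.sin (αy/2) * Real.cos (αz/2) : ℝ)) • (σy ⊗ₖ σy) +
  ((Real.sin (αx/2) * Real.sin (αy/2) * Real.cos (αz/2) : ℝ) +
      Complex.I * (Real.cos (αx/2) * Real.cos (αy/2) * Real.sin (αz/2) : ℝ)) • (σz ⊗ₖ σz)

set_option maxHeartbeats 2000000 in
lemma Dmat_eq (αx αy αz : ℝ) : Dmat αx αy αz = Dc αx αy αz := by
  have hg : (Complex.I / 2) • ((αx : ℂ) • (σx ⊗ₖ σx) +
      (αy : ℂ) • (σy ⊗ₖ σy) + (αz : ℂ) • (σz ⊗ₖ σz)) =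
      (((αx/2 : ℝ) : ℂ) * Complex.I) • (σx ⊗ₖ σx) +
      ((((αy/2 : ℝ) : ℂ) * Complex.I) • (σy ⊗ₖ σy) +
       (((αz/2 : ℝ) : ℂ) * Complex.I) • (σz ⊗ₖ σz)) := by
    match_scalars <;> push_cast <;> ring
  rw [Dmat, hg, Matrix.exp_add_of_commute, Matrix.exp_add_of_commute,
    exp_smul_of_sq_eq_one _ XX_sq, exp_smul_of_sq_eq_one _ YY_sq,
    exp_smul_of_sq_eq_one _ ZZ_sq]
  · simp only [Complex.cosh_mul_I, Complex.sinh_mul_I, ← Complex.ofReal_cos, ← Complex.ofReal_sin]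
    ext ⟨i1,i2⟩ ⟨j1,j2⟩
    fin_cases i1 <;> fin_cases i2 <;> fin_cases j1 <;> fin_cases j2 <;>
      simp [Dc, σx, σy, σz, Matrix.mul_apply, Fintype.sum_prod_type, Fin.sum_univ_succ,
          Matrix.one_apply, kroneckerMap_apply, Prod.ext_iff, Matrix.add_apply, Matrix.smul_apply] <;>
      ring_nf <;>
      simp only [Complex.I_sq, show Complex.I^3 = -Complex.I by
          rw [pow_succ, Complex.I_sq]; ring] <;>
      ring
  · exact (commYZ.smul_left _).smul_right _
  · exact ((commXY.smul_left _).smul_right _).add_right ((commXZ.smul_left _).smul_right _)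

/-- |A|² coefficient -/
noncomputable def cAA (αx αy αz : ℝ) : ℝ :=
  (Real.cos (αx/2))^2 * (Real.cos (αy/2))^2 * (Real.cos (αz/2))^2 +
  (Real.sin (αx/2))^2 * (Real.sin (αy/2))^2 * (Real.sin (αz/2))^2
noncomputable def cBB (αx αy αz : ℝ) : ℝ :=
  (Real.sin (αx/2))^2 * (Real.cos (αy/2))^2 * (Real.cos (αz/2))^2 +
  (Real.cos (αx/2))^2 * (Real.sin (αy/2))^2 * (Real.sin (αz/2))^2
noncomputable def cCC (αx αy αz : ℝ) : ℝ :=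
  (Real.sin (αx/2))^2 * (Real.cos (αy/2))^2 * (Real.sin (αz/2))^2 +
  (Real.cos (αx/2))^2 * (Real.sin (αy/2))^2 * (Real.cos (αz/2))^2
noncomputable def cEE (αx αy αz : ℝ) : ℝ :=
  (Real.sin (αx/2))^2 * (Real.sin (αy/2))^2 * (Real.cos (αz/2))^2 +
  (Real.cos (αx/2))^2 * (Real.cos (αy/2))^2 * (Real.sin (αz/2))^2

set_option maxHeartbeats 4000000 in
lemma channel_apply (αx αy αz : ℝ) (ξ : Matrix (Fin 2) (Fin 2) ℂ) :
    ptraceH (Dc αx αy αz * (ξ ⊗ₖ ((1 / 2 : ℂ) • (1 : Matrix (Fin 2) (Fin 2) ℂ))) *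
        (Dc αx αy αz)ᴴ) =
    !![((cAA αx αy αz + cEE αx αy αz : ℝ) : ℂ) * ξ 0 0 +
         ((cBB αx αy αz + cCC αx αy αz : ℝ) : ℂ) * ξ 1 1,
       ((cAA αx αy αz - cEE αx αy αz : ℝ) : ℂ) * ξ 0 1 +
         ((cBB αx αy αz - cCC αx αy αz : ℝ) : ℂ) * ξ 1 0;
       ((cBB αx αy αz - cCC αx αy αz : ℝ) : ℂ) * ξ 0 1 +
         ((cAA αx αy αz - cEE αx αy αz : ℝ) : ℂ) * ξ 1 0,
       ((cBB αx αy αz + cCC αx αy αz : ℝ) : ℂ) * ξ 0 0 +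
         ((cAA αx αy αz + cEE αx αy αz : ℝ) : ℂ) * ξ 1 1] := by
  unfold Dc cAA cBB cCC cEE
  generalize Real.cos (αx/2) = c1
  generalize Real.sin (αx/2) = s1
  generalize Real.cos (αy/2) = c2
  generalize Real.sin (αy/2) = s2
  generalize Real.cos (αz/2) = c3
  generalize Real.sin (αz/2) = s3
  ext i j
  fin_cases i <;> fin_cases j <;>
    simp [ptraceH, σx, σy, σz, Matrix.mul_apply,
      Fintype.sum_prod_type, Fin.sum_univ_succ, Matrix.one_apply, kroneckerMap_apply,
      Prod.ext_iff, Matrix.add_apply, Matrix.smul_apply, Matrix.conjTranspose_apply,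
      Complex.star_def, map_add, _root_.map_mul, Complex.conj_ofReal, Complex.conj_I] <;>
  ring_nf <;>
  simp only [Complex.I_sq, show Complex.I^3 = -Complex.I by rw [pow_succ, Complex.I_sq]; ring,
    show Complex.I^4 = 1 by rw [pow_succ, show Complex.I^3 = -Complex.I by
      rw [pow_succ, Complex.I_sq]; ring]; simp] <;>
  ring

lemma mul_le_one_aux {a b : ℝ} (ha1 : a ≤ 1) (hb0 : 0 ≤ b) (hb1 : b ≤ 1) : a * b ≤ 1 := by
  nlinarith

lemma frob_case1 {L rs u v nb nw : ℝ}
    (hreal : L^2*u + L^2*v + 2*nw = u + v + 2*nb)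
    (hnw : nw ≤ rs^2*nb) (hnb : 0 ≤ nb) (hrs0 : 0 ≤ rs) (hrs1 : rs ≤ 1)
    (hL0 : 0 ≤ L) (hL1 : L ≤ 1) (hv : 0 ≤ v) (hu : 0 < u) : 1 ≤ L := by
  have h4 : rs^2 ≤ 1 := by nlinarith
  have h5 : L^2 ≤ 1 := by nlinarith
  have h6 : u ≤ L^2 * u := by
    nlinarith [mul_nonneg hnb (sub_nonneg.mpr h4), mul_nonneg hv (sub_nonneg.mpr h5)]
  have h7 : 1 ≤ L^2 := by nlinarith
  nlinarith

lemma frob_case2 {L rs u v nb nw : ℝ}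
    (hreal : L^2*u + L^2*v + 2*nw = u + v + 2*nb)
    (hnw : nw ≤ rs^2*nb) (hnb : 0 < nb) (hrs0 : 0 ≤ rs)
    (hL0 : 0 ≤ L) (hL1 : L ≤ 1) (hu : 0 ≤ u) (hv : 0 ≤ v) : 1 ≤ rs := by
  have h5 : L^2 ≤ 1 := by nlinarith
  have h6 : nb ≤ nw := by
    nlinarith [mul_nonneg hu (sub_nonneg.mpr h5), mul_nonneg hv (sub_nonneg.mpr h5)]
  have h7 : 1 ≤ rs^2 := by nlinarith
  nlinarith

set_option maxHeartbeats 2000000 in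
/-- If the concurrent memory channel
`C(ξ) = W₂ · Tr_H[D(α)(ξ ⊗ I/2)D(α)†] · W₂†` (with `α` in the canonical range
`0 ≤ |α_z| ≤ α_y ≤ α_x ≤ π/2` and `W₂` unitary) has a fixed point other than the
maximally mixed state, then `α_y = α_z = 0`, i.e. the interaction is a controlled
unitary. -/
theorem nonunique_fixed_point_forces_controlled (αx αy αz : ℝ)
    (hza : |αz| ≤ αy) (hyx : αy ≤ αx) (hx : αx ≤ Real.pi / 2)
    (W₂ : Matrix (Fin 2) (Fin 2) ℂ) (hW : W₂ ∈ Matrix.unitaryGroup (Fin 2) ℂ)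
    (ξ : Matrix (Fin 2) (Fin 2) ℂ) (hξ : ξ.PosSemidef ∧ ξ.trace = 1)
    (hne : ξ ≠ (1 / 2 : ℂ) • (1 : Matrix (Fin 2) (Fin 2) ℂ))
    (hfix : W₂ * ptraceH (Dmat αx αy αz *
        (ξ ⊗ₖ ((1 / 2 : ℂ) • (1 : Matrix (Fin 2) (Fin 2) ℂ))) *
        (Dmat αx αy αz)ᴴ) * W₂ᴴ = ξ) :
    αy = 0 ∧ αz = 0 := by
  obtain ⟨hpsd, htr⟩ := hξ
  have hH : ξ.IsHermitian := hpsd.1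
  -- ranges and cosine facts
  have hy0 : 0 ≤ αy := le_trans (abs_nonneg αz) hza
  have hx0 : 0 ≤ αx := le_trans hy0 hyx
  have hpi : (0:ℝ) < Real.pi := Real.pi_pos
  have hzr := abs_le.mp (le_trans hza (le_trans hyx hx))
  have hcy1 : Real.cos αy ≤ 1 := Real.cos_le_one _
  have hcx1 : Real.cos αx ≤ 1 := Real.cos_le_one _
  have hcz1 : Real.cos αz ≤ 1 := Real.cos_le_one _
  have hcy0 : 0 ≤ Real.cos αy :=
    Real.cos_nonneg_of_mem_Icc ⟨by linarith, by linarith⟩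
  have hcx0 : 0 ≤ Real.cos αx :=
    Real.cos_nonneg_of_mem_Icc ⟨by linarith, by linarith⟩
  have hcz0 : 0 ≤ Real.cos αz :=
    Real.cos_nonneg_of_mem_Icc ⟨by linarith [hzr.1], by linarith [hzr.2]⟩
  have hcyx : Real.cos αx ≤ Real.cos αy :=
    Real.cos_le_cos_of_nonneg_of_le_pi hy0 (by linarith) hyx
  -- half-angle identities
  have h1 : Real.sin (αx/2)^2 + Real.cos (αx/2)^2 = 1 := Real.sin_sq_add_cos_sq _
  have h2 : Real.sin (αy/2)^2 + Real.cos (αy/2)^2 = 1 := Real.sin_sq_add_cos_sq _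
  have h3 : Real.sin (αz/2)^2 + Real.cos (αz/2)^2 = 1 := Real.sin_sq_add_cos_sq _
  have hdx : Real.cos αx = Real.cos (αx/2)^2 - Real.sin (αx/2)^2 := by
    have := Real.cos_two_mul' (αx/2); rwa [show 2*(αx/2) = αx by ring] at this
  have hdy : Real.cos αy = Real.cos (αy/2)^2 - Real.sin (αy/2)^2 := by
    have := Real.cos_two_mul' (αy/2); rwa [show 2*(αy/2) = αy by ring] at this
  have hdz : Real.cos αz = Real.cos (αz/2)^2 - Real.sin (αz/2)^2 := by
    have := Real.cos_two_mul' (αz/2); rwa [show 2*(αz/2) = αz by ring] at this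
  -- rewrite the fixed point equation
  rw [Dmat_eq, channel_apply] at hfix
  -- the four real coefficients
  set A' := cAA αx αy αz with hA'
  set B' := cBB αx αy αz with hB'
  set C' := cCC αx αy αz with hC'
  set E' := cEE αx αy αz with hE'
  clear_value A' B' C' E'
  have hsum : A' + B' + C' + E' = 1 := by
    rw [hA', hB', hC', hE']; unfold cAA cBB cCC cEE
    linear_combination ((Real.sin (αy/2)^2 + Real.cos (αy/2)^2) *
      (Real.sin (αz/2)^2 + Real.cos (αz/2)^2)) * h1 +
      ((Real.sin (αz/2)^2 + Real.cos (αz/2)^2)) * h2 + h3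
  have hlz : A' + E' - B' - C' = Real.cos αx * Real.cos αy := by
    rw [hA', hB', hC', hE', hdx, hdy]; unfold cAA cBB cCC cEE
    linear_combination ((Real.cos (αx/2)^2 - Real.sin (αx/2)^2) *
      (Real.cos (αy/2)^2 - Real.sin (αy/2)^2)) * h3
  have hrs : (A' - E') + (B' - C') = Real.cos αy * Real.cos αz := by
    rw [hA', hB', hC', hE', hdy, hdz]; unfold cAA cBB cCC cEE
    linear_combination ((Real.cos (αy/2)^2 - Real.sin (αy/2)^2) *
      (Real.cos (αz/2)^2 - Real.sin (αz/2)^2)) * h1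
  have hrval : A' - E' = Real.cos αz * (Real.cos αx + Real.cos αy) / 2 := by
    rw [hA', hE', hdx, hdy, hdz]; unfold cAA cEE
    linear_combination ((Real.cos (αz/2)^2 - Real.sin (αz/2)^2) *
        (Real.cos (αx/2)^2 - Real.sin (αx/2)^2) / 2) * h2 +
      ((Real.cos (αz/2)^2 - Real.sin (αz/2)^2) *
        (Real.cos (αy/2)^2 - Real.sin (αy/2)^2) / 2) * h1
  have hsval : B' - C' = Real.cos αz * (Real.cos αy - Real.cos αx) / 2 := by
    rw [hB', hC', hdx, hdy, hdz]; unfold cBB cCC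
    linear_combination ((Real.cos (αz/2)^2 - Real.sin (αz/2)^2) *
        (Real.cos (αy/2)^2 - Real.sin (αy/2)^2) / 2) * h1 -
      ((Real.cos (αz/2)^2 - Real.sin (αz/2)^2) *
        (Real.cos (αx/2)^2 - Real.sin (αx/2)^2) / 2) * h2
  have hL0 : 0 ≤ A' + E' - B' - C' := by rw [hlz]; exact mul_nonneg hcx0 hcy0
  have hL1 : A' + E' - B' - C' ≤ 1 := by rw [hlz]; exact mul_le_one_aux hcx1 hcy0 hcy1
  have hrr0 : 0 ≤ A' - E' := by rw [hrval]; positivity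
  have hss0 : 0 ≤ B' - C' := by
    rw [hsval]
    have hd : 0 ≤ Real.cos αy - Real.cos αx := by linarith
    positivity
  have hrs1 : (A' - E') + (B' - C') ≤ 1 := by rw [hrs]; exact mul_le_one_aux hcy1 hcz0 hcz1
  have hrs0 : 0 ≤ (A' - E') + (B' - C') := by linarith
  -- entries of ξ
  have h10 : ξ 1 0 = (starRingEnd ℂ) (ξ 0 1) := by
    conv_lhs => rw [← hH]
    simp [Matrix.conjTranspose_apply, Complex.star_def]
  have h00 : (starRingEnd ℂ) (ξ 0 0) = ξ 0 0 := by
    conv_rhs => rw [← hH]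
    simp [Matrix.conjTranspose_apply, Complex.star_def]
  obtain ⟨t, ht⟩ : ∃ r : ℝ, ξ 0 0 = (r : ℂ) :=
    ⟨(ξ 0 0).re, ((Complex.conj_eq_iff_re.mp h00).symm)⟩
  have htrace : ξ 0 0 + ξ 1 1 = 1 := by
    have := htr; rwa [Matrix.trace_fin_two] at this
  have h11 : ξ 1 1 = ((1 - t : ℝ) : ℂ) := by
    push_cast; rw [← ht]; linear_combination htrace
  -- unitarity
  have hW1 : W₂ᴴ * W₂ = 1 := by
    have := hW.1; rwa [Matrix.star_eq_conjTranspose] at this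
  have hW2 : W₂ * W₂ᴴ = 1 := by
    have := hW.2; rwa [Matrix.star_eq_conjTranspose] at this
  -- the shifted matrices
  set Xm : Matrix (Fin 2) (Fin 2) ℂ :=
    !![((t - 1/2 : ℝ) : ℂ), ξ 0 1; (starRingEnd ℂ) (ξ 0 1), ((1/2 - t : ℝ) : ℂ)] with hXm
  set w : ℂ := ((A' - E' : ℝ) : ℂ) * ξ 0 1 +
    ((B' - C' : ℝ) : ℂ) * (starRingEnd ℂ) (ξ 0 1) with hw
  set L := A' + E' - B' - C' with hLdef
  set Nm : Matrix (Fin 2) (Fin 2) ℂ :=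
    !![((L * (t - 1/2) : ℝ) : ℂ), w; (starRingEnd ℂ) w, ((L * (1/2 - t) : ℝ) : ℂ)] with hNm
  clear_value Xm w L Nm
  have hsumC : ((A' : ℂ)) + B' + C' + E' = 1 := by exact_mod_cast hsum
  have hXeq : ξ - (1/2 : ℂ) • 1 = Xm := by
    ext i j
    fin_cases i <;> fin_cases j <;>
      simp [hXm, Matrix.sub_apply, Matrix.smul_apply, Matrix.one_apply, ht, h11, h10] <;>
      push_cast <;> ring
  have hNeq : !![((A' + E' : ℝ) : ℂ) * ξ 0 0 + ((B' + C' : ℝ) : ℂ) * ξ 1 1,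
       ((A' - E' : ℝ) : ℂ) * ξ 0 1 + ((B' - C' : ℝ) : ℂ) * ξ 1 0;
       ((B' - C' : ℝ) : ℂ) * ξ 0 1 + ((A' - E' : ℝ) : ℂ) * ξ 1 0,
       ((B' + C' : ℝ) : ℂ) * ξ 0 0 + ((A' + E' : ℝ) : ℂ) * ξ 1 1] - (1/2 : ℂ) • 1 = Nm := by
    ext i j
    fin_cases i <;> fin_cases j <;>
      simp only [hNm, hw, hLdef, Matrix.sub_apply, Matrix.smul_apply, Matrix.one_apply,
        Matrix.cons_val', Matrix.cons_val_zero, Matrix.cons_val_one, Matrix.head_cons,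
        Matrix.head_fin_const, Matrix.empty_val', Matrix.cons_val_fin_one, Matrix.of_apply,
        ht, h11, h10] <;>
      simp [map_add, _root_.map_mul, Complex.conj_ofReal, Complex.conj_conj] <;>
      push_cast <;> ring_nf <;> linear_combination hsumC / 2
  -- fixed point for the shifted matrices
  have hXN : W₂ * Nm * W₂ᴴ = Xm := by
    rw [← hXeq, ← hNeq, Matrix.mul_sub, Matrix.sub_mul, hfix]
    congr 1
    rw [Matrix.mul_smul, Matrix.mul_one, Matrix.smul_mul, hW2]
  -- Frobenius norm is preserved
  have hkey : (Nmᴴ * Nm).trace = (Xmᴴ * Xm).trace := by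
    rw [← hXN]
    have e1 : (W₂ * Nm * W₂ᴴ)ᴴ * (W₂ * Nm * W₂ᴴ) =
        W₂ * (Nmᴴ * ((W₂ᴴ * W₂) * (Nm * W₂ᴴ))) := by
      simp only [Matrix.conjTranspose_mul, Matrix.conjTranspose_conjTranspose, Matrix.mul_assoc]
    rw [e1, hW1, Matrix.one_mul, ← Matrix.mul_assoc, ← Matrix.mul_assoc,
      Matrix.trace_mul_cycle, ← Matrix.mul_assoc, hW1, Matrix.one_mul]
  -- turn the trace identity into a real equation
  have hbb : ((Complex.normSq (ξ 0 1) : ℝ) : ℂ) =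
      (starRingEnd ℂ) (ξ 0 1) * ξ 0 1 := by
    rw [← Complex.normSq_eq_conj_mul_self]
  have hww : ((Complex.normSq w : ℝ) : ℂ) = (starRingEnd ℂ) w * w := by
    rw [← Complex.normSq_eq_conj_mul_self]
  have htrX : (Xmᴴ * Xm).trace =
      (((t - 1/2)^2 + (1/2 - t)^2 + 2 * Complex.normSq (ξ 0 1) : ℝ) : ℂ) := by
    simp [hXm, Matrix.trace_fin_two, Matrix.mul_apply, Fin.sum_univ_succ,
      Matrix.conjTranspose_apply, Complex.star_def, Complex.conj_ofReal, Complex.conj_conj,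
      map_ofNat, map_sub, map_add, _root_.map_mul]
    push_cast [hbb]
    ring
  have htrN : (Nmᴴ * Nm).trace =
      ((L^2 * (t - 1/2)^2 + L^2 * (1/2 - t)^2 + 2 * Complex.normSq w : ℝ) : ℂ) := by
    simp [hNm, Matrix.trace_fin_two, Matrix.mul_apply, Fin.sum_univ_succ,
      Matrix.conjTranspose_apply, Complex.star_def, Complex.conj_ofReal, Complex.conj_conj,
      map_ofNat, map_sub, map_add, _root_.map_mul]
    push_cast [hww]
    ring
  have hreal : L^2 * (t - 1/2)^2 + L^2 * (1/2 - t)^2 + 2 * Complex.normSq w =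
      (t - 1/2)^2 + (1/2 - t)^2 + 2 * Complex.normSq (ξ 0 1) := by
    have hc := hkey
    rw [htrX, htrN] at hc
    exact_mod_cast hc
  -- bound on normSq w
  have habsw : ‖w‖ ≤ ((A' - E') + (B' - C')) * ‖ξ 0 1‖ := by
    calc ‖w‖ ≤ ‖((A' - E' : ℝ) : ℂ) * ξ 0 1‖ +
        ‖((B' - C' : ℝ) : ℂ) * (starRingEnd ℂ) (ξ 0 1)‖ := by
          rw [hw]; exact norm_add_le _ _
    _ = |(A' - E' : ℝ)| * ‖ξ 0 1‖ +
        |(B' - C' : ℝ)| * ‖(starRingEnd ℂ) (ξ 0 1)‖ := by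
        rw [norm_mul, norm_mul, Complex.norm_real, Complex.norm_real, Real.norm_eq_abs, Real.norm_eq_abs]
    _ = (A' - E') * ‖ξ 0 1‖ + (B' - C') * ‖ξ 0 1‖ := by
        rw [Complex.norm_conj, abs_of_nonneg hrr0, abs_of_nonneg hss0]
    _ = ((A' - E') + (B' - C')) * ‖ξ 0 1‖ := by ring
  have hnsqw : Complex.normSq w ≤
      ((A' - E') + (B' - C'))^2 * Complex.normSq (ξ 0 1) := by
    have h := pow_le_pow_left₀ (norm_nonneg w) habsw 2
    rw [Complex.sq_norm] at h
    calc Complex.normSq w ≤ (((A' - E') + (B' - C')) * ‖ξ 0 1‖)^2 := h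
    _ = ((A' - E') + (B' - C'))^2 * Complex.normSq (ξ 0 1) := by
        rw [mul_pow, Complex.sq_norm]
  -- non-triviality of the fixed point
  have hcases : t ≠ 1/2 ∨ ξ 0 1 ≠ 0 := by
    by_contra hcon
    push_neg at hcon
    obtain ⟨ht2, hb0⟩ := hcon
    apply hne
    ext i j
    fin_cases i <;> fin_cases j <;>
      simp [ht, h11, h10, hb0, ht2, Matrix.smul_apply, Matrix.one_apply] <;>
      norm_num
  -- conclude cos αy = 1
  have hcy : Real.cos αy = 1 := by
    rcases hcases with hc | hc
    · have hu : 0 < (t - 1/2)^2 := by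
        have hne0 : t - 1/2 ≠ 0 := sub_ne_zero.mpr hc
        positivity
      have hL2 : 1 ≤ L := frob_case1 hreal hnsqw (Complex.normSq_nonneg _)
        hrs0 hrs1 hL0 hL1 (sq_nonneg _) hu
      have hL3 : 1 ≤ Real.cos αx * Real.cos αy := by rw [← hlz]; exact hL2
      have : 1 ≤ Real.cos αy := le_trans hL3 (mul_le_of_le_one_left hcy0 hcx1)
      linarith
    · have hb2 : 0 < Complex.normSq (ξ 0 1) := Complex.normSq_pos.mpr hc
      have hrs2 : 1 ≤ (A' - E') + (B' - C') := frob_case2 hreal hnsqw hb2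
        hrs0 hL0 hL1 (sq_nonneg _) (sq_nonneg _)
      have hrs3 : 1 ≤ Real.cos αy * Real.cos αz := by rw [← hrs]; exact hrs2
      have : 1 ≤ Real.cos αy := le_trans hrs3 (mul_le_of_le_one_right hcy0 hcz1)
      linarith
  have hay : αy = 0 := by
    have h2pi : αy < 2 * Real.pi := by linarith
    have hm2pi : -(2 * Real.pi) < αy := by linarith
    exact (Real.cos_eq_one_iff_of_lt_of_lt hm2pi h2pi).mp hcy
  refine ⟨hay, ?_⟩
  have hz2 : |αz| ≤ 0 := by rw [hay] at hza; exact hza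
  exact abs_eq_zero.mp (le_antisymm hz2 (abs_nonneg _))
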